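/- Let k be a field with char k ≠ 2. Then so₈(k) is the direct sum of the (+1)-eigenspace g = {v ∈ so₈(k) : s v s = v} and the (−1)-eigenspace V = {v ∈ so₈(k) : s v s = −v} of the involution θ(v) = s v s; the subspace g is a Lie subalgebra of so₈(k) isomorphic as a Lie algebra to the direct product of two copies of so₄(k), and dim_k V = 16. -/

import Mathlib

open Matrix

noncomputable section

variable (k : Type*) [Field k]

/-- The 8×8 matrix `Ψ`, block diagonal with two anti-diagonal 4×4 blocks. -/
def Psi : Matrix (Fin 8) (Fin 8) k :=
  !![0,0,0,1,0,0,0,0;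
     0,0,1,0,0,0,0,0;
     0,1,0,0,0,0,0,0;
     1,0,0,0,0,0,0,0;
     0,0,0,0,0,0,0,1;
     0,0,0,0,0,0,1,0;
     0,0,0,0,0,1,0,0;
     0,0,0,0,1,0,0,0]

/-- The matrix `s = diag(1,−1,−1,1,1,−1,−1,1)`. -/
def sMat : Matrix (Fin 8) (Fin 8) k := Matrix.diagonal ![1,-1,-1,1,1,-1,-1,1]

/-- `so₈(k) = {v : vᵀΨ = −Ψv}`. -/
def so8Set : Set (Matrix (Fin 8) (Fin 8) k) := {v | vᵀ * Psi k = -(Psi k * v)}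

/-- The `(+1)`-eigenspace `g` of `θ(v) = svs` on `so₈(k)`. -/
def gSet : Set (Matrix (Fin 8) (Fin 8) k) :=
  {v | vᵀ * Psi k = -(Psi k * v) ∧ sMat k * v * sMat k = v}

/-- The `(−1)`-eigenspace `V` of `θ(v) = svs` on `so₈(k)`. -/
def VSet : Set (Matrix (Fin 8) (Fin 8) k) :=
  {v | vᵀ * Psi k = -(Psi k * v) ∧ sMat k * v * sMat k = -v}

/-- `V` as a `k`-submodule of the 8×8 matrices. -/
def VSubm : Submodule k (Matrix (Fin 8) (Fin 8) k) where
  carrier := VSet k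
  add_mem' := by
    intro a b ha hb
    obtain ⟨ha1, ha2⟩ := ha
    obtain ⟨hb1, hb2⟩ := hb
    constructor
    · rw [Matrix.transpose_add, Matrix.add_mul, ha1, hb1, Matrix.mul_add, neg_add]
    · rw [Matrix.mul_add, Matrix.add_mul, ha2, hb2, neg_add]
  zero_mem' := by constructor <;> simp
  smul_mem' := by
    intro c a ha
    obtain ⟨ha1, ha2⟩ := ha
    constructor
    · rw [Matrix.transpose_smul, Matrix.smul_mul, ha1, Matrix.mul_smul, smul_neg]
    · rw [Matrix.mul_smul, Matrix.smul_mul, ha2, smul_neg]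

/-- The 4×4 anti-diagonal matrix `J`. -/
def J4 : Matrix (Fin 4) (Fin 4) k :=
  !![0,0,0,1;
     0,0,1,0;
     0,1,0,0;
     1,0,0,0]

/-- `so₄(k) = {x : xᵀJ = −Jx}`. -/
def so4Set : Set (Matrix (Fin 4) (Fin 4) k) := {x | xᵀ * J4 k = -(J4 k * x)}


namespace Stmt2Aux

@[simp] lemma cons_val_five {α : Type*} {m : ℕ} (x : α) (u : Fin (m+5) → α) :
    vecCons x u 5 = vecHead (vecTail (vecTail (vecTail (vecTail u)))) := rfl
@[simp] lemma cons_val_six {α : Type*} {m : ℕ} (x : α) (u : Fin (m+6) → α) :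
    vecCons x u 6 = vecHead (vecTail (vecTail (vecTail (vecTail (vecTail u))))) := rfl
@[simp] lemma cons_val_seven {α : Type*} {m : ℕ} (x : α) (u : Fin (m+7) → α) :
    vecCons x u 7 = vecHead (vecTail (vecTail (vecTail (vecTail (vecTail (vecTail u)))))) := rfl
@[simp] lemma vecHead_const {α : Type*} {n : ℕ} (a : α) : (vecHead fun _ : Fin (n+1) => a) = a := rfl
@[simp] lemma vecTail_const {α : Type*} {n : ℕ} (a : α) :
    (vecTail fun _ : Fin (n+1) => a) = fun _ : Fin n => a := rfl

def aIdx : Fin 4 → Fin 8 := ![0,4,7,3]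
def bIdx : Fin 4 → Fin 8 := ![1,5,6,2]
def sig8 : Fin 8 → Fin 8 := ![3,2,1,0,7,6,5,4]
def tau4 : Fin 4 → Fin 4 := ![3,2,1,0]
def cls8 : Fin 8 → Bool := ![true,false,false,true,true,false,false,true]
def idx8 : Fin 8 → Fin 4 := ![0,0,3,3,1,1,2,2]

/-- block embedding of a pair of 4×4 matrices into the 8×8 matrices. -/
def embF (X Y : Matrix (Fin 4) (Fin 4) k) : Matrix (Fin 8) (Fin 8) k :=
  Matrix.of fun i j =>
    if cls8 i && cls8 j then X (idx8 i) (idx8 j)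
    else if !(cls8 i) && !(cls8 j) then Y (idx8 i) (idx8 j) else 0

lemma embF_sub (X X' Y Y' : Matrix (Fin 4) (Fin 4) k) :
    embF k (X - X') (Y - Y') = embF k X Y - embF k X' Y' := by
  ext i j
  simp only [embF, of_apply, Matrix.sub_apply]
  split_ifs <;> simp

lemma embF_neg (X Y : Matrix (Fin 4) (Fin 4) k) :
    embF k (-X) (-Y) = -embF k X Y := by
  ext i j
  simp only [embF, of_apply, Matrix.neg_apply]
  split_ifs <;> simp

/-- the projection map onto the pair of diagonal blocks. -/
def phiL : Matrix (Fin 8) (Fin 8) k →ₗ[k]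
    Matrix (Fin 4) (Fin 4) k × Matrix (Fin 4) (Fin 4) k where
  toFun v := (v.submatrix aIdx aIdx, v.submatrix bIdx bIdx)
  map_add' _ _ := rfl
  map_smul' _ _ := rfl

@[simp] lemma phiL_fst (v : Matrix (Fin 8) (Fin 8) k) :
    (phiL k v).1 = v.submatrix aIdx aIdx := rfl
@[simp] lemma phiL_snd (v : Matrix (Fin 8) (Fin 8) k) :
    (phiL k v).2 = v.submatrix bIdx bIdx := rfl

/-- embedding of a 4×4 matrix as the "cross" part. -/
def embVF (X : Matrix (Fin 4) (Fin 4) k) : Matrix (Fin 8) (Fin 8) k :=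
  Matrix.of fun i j =>
    if cls8 i && !(cls8 j) then X (idx8 i) (idx8 j)
    else if !(cls8 i) && cls8 j then -X (tau4 (idx8 j)) (tau4 (idx8 i)) else 0

def eAM : Matrix (Fin 8) (Fin 8) k := Matrix.diagonal fun i => if cls8 i then 1 else 0
def eBM : Matrix (Fin 8) (Fin 8) k := Matrix.diagonal fun i => if cls8 i then 0 else 1

set_option maxHeartbeats 4000000

lemma subA_t (v : Matrix (Fin 8) (Fin 8) k) :
    (v.submatrix aIdx aIdx)ᵀ * J4 k = (vᵀ * Psi k).submatrix aIdx aIdx := by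
  ext p q
  fin_cases p <;> fin_cases q <;>
    simp [J4, Psi, aIdx, mul_apply, Fin.sum_univ_four, Fin.sum_univ_eight,
      Matrix.vecMul, Matrix.mulVec, dotProduct, Matrix.vecHead, Matrix.vecTail, -Matrix.submatrix_cons_row, -Matrix.submatrix_empty]

lemma subA_m (v : Matrix (Fin 8) (Fin 8) k) :
    J4 k * v.submatrix aIdx aIdx = (Psi k * v).submatrix aIdx aIdx := by
  ext p q
  fin_cases p <;> fin_cases q <;>
    simp [J4, Psi, aIdx, mul_apply, Fin.sum_univ_four, Fin.sum_univ_eight,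
      Matrix.vecMul, Matrix.mulVec, dotProduct, Matrix.vecHead, Matrix.vecTail, -Matrix.submatrix_cons_row, -Matrix.submatrix_empty]

lemma subB_t (v : Matrix (Fin 8) (Fin 8) k) :
    (v.submatrix bIdx bIdx)ᵀ * J4 k = (vᵀ * Psi k).submatrix bIdx bIdx := by
  ext p q
  fin_cases p <;> fin_cases q <;>
    simp [J4, Psi, bIdx, mul_apply, Fin.sum_univ_four, Fin.sum_univ_eight,
      Matrix.vecMul, Matrix.mulVec, dotProduct, Matrix.vecHead, Matrix.vecTail, -Matrix.submatrix_cons_row, -Matrix.submatrix_empty]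

lemma subB_m (v : Matrix (Fin 8) (Fin 8) k) :
    J4 k * v.submatrix bIdx bIdx = (Psi k * v).submatrix bIdx bIdx := by
  ext p q
  fin_cases p <;> fin_cases q <;>
    simp [J4, Psi, bIdx, mul_apply, Fin.sum_univ_four, Fin.sum_univ_eight,
      Matrix.vecMul, Matrix.mulVec, dotProduct, Matrix.vecHead, Matrix.vecTail, -Matrix.submatrix_cons_row, -Matrix.submatrix_empty]

lemma emb_mul (X Y X' Y' : Matrix (Fin 4) (Fin 4) k) :
    embF k X Y * embF k X' Y' = embF k (X * X') (Y * Y') := by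
  ext i j
  fin_cases i <;> fin_cases j <;>
    ( simp [embF, cls8, idx8, mul_apply, Fin.sum_univ_four, Fin.sum_univ_eight,
        Matrix.vecHead, Matrix.vecTail]
      <;> ring )

lemma emb_phi (h2 : (2:k) ≠ 0) (v : Matrix (Fin 8) (Fin 8) k) :
    embF k (v.submatrix aIdx aIdx) (v.submatrix bIdx bIdx)
      = (2⁻¹ : k) • (v + sMat k * v * sMat k) := by
  ext i j
  fin_cases i <;> fin_cases j <;>
    ( simp [embF, cls8, idx8, aIdx, bIdx, sMat, diagonal_mul, mul_diagonal,
        Matrix.smul_apply, Matrix.add_apply, smul_eq_mul,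
        Matrix.vecHead, Matrix.vecTail]
      <;> field_simp
      <;> ring )

lemma emb_t_psi (X Y : Matrix (Fin 4) (Fin 4) k) :
    (embF k X Y)ᵀ * Psi k = embF k (Xᵀ * J4 k) (Yᵀ * J4 k) := by
  ext i j
  fin_cases i <;> fin_cases j <;>
    simp [embF, cls8, idx8, J4, Psi, mul_apply, Fin.sum_univ_four, Fin.sum_univ_eight,
      Matrix.vecMul, Matrix.mulVec, dotProduct, Matrix.vecHead, Matrix.vecTail]

lemma psi_emb (X Y : Matrix (Fin 4) (Fin 4) k) :
    Psi k * embF k X Y = embF k (J4 k * X) (J4 k * Y) := by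
  ext i j
  fin_cases i <;> fin_cases j <;>
    simp [embF, cls8, idx8, J4, Psi, mul_apply, Fin.sum_univ_four, Fin.sum_univ_eight,
      Matrix.vecMul, Matrix.mulVec, dotProduct, Matrix.vecHead, Matrix.vecTail]

lemma emb_conj_s (X Y : Matrix (Fin 4) (Fin 4) k) :
    sMat k * embF k X Y * sMat k = embF k X Y := by
  ext i j
  fin_cases i <;> fin_cases j <;>
    simp [embF, cls8, idx8, sMat, diagonal_mul, mul_diagonal,
      Matrix.vecHead, Matrix.vecTail]

lemma GA_emb (X Y : Matrix (Fin 4) (Fin 4) k) :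
    (embF k X Y).submatrix aIdx aIdx = X := by
  ext p q
  fin_cases p <;> fin_cases q <;>
    simp [embF, cls8, idx8, aIdx, Matrix.vecHead, Matrix.vecTail]

lemma GB_emb (X Y : Matrix (Fin 4) (Fin 4) k) :
    (embF k X Y).submatrix bIdx bIdx = Y := by
  ext p q
  fin_cases p <;> fin_cases q <;>
    simp [embF, cls8, idx8, bIdx, Matrix.vecHead, Matrix.vecTail]

lemma s_mul_s : sMat k * sMat k = 1 := by
  ext i j
  fin_cases i <;> fin_cases j <;>
    simp [sMat, mul_apply, Fin.sum_univ_eight, Matrix.one_apply, diagonal_apply,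
      Matrix.vecHead, Matrix.vecTail]

lemma s_transpose : (sMat k)ᵀ = sMat k := diagonal_transpose _

lemma psi_mul_psi : Psi k * Psi k = 1 := by
  ext i j
  fin_cases i <;> fin_cases j <;>
    simp [Psi, mul_apply, Fin.sum_univ_eight, Matrix.one_apply,
      Matrix.vecHead, Matrix.vecTail]

lemma s_psi_comm : sMat k * Psi k = Psi k * sMat k := by
  ext i j
  fin_cases i <;> fin_cases j <;>
    simp [Psi, sMat, diagonal_mul, mul_diagonal, Matrix.vecHead, Matrix.vecTail]

lemma psi_conj (M : Matrix (Fin 8) (Fin 8) k) :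
    Psi k * M * Psi k = M.submatrix sig8 sig8 := by
  ext i j
  fin_cases i <;> fin_cases j <;>
    simp [Psi, sig8, mul_apply, Fin.sum_univ_eight,
      Matrix.vecMul, Matrix.mulVec, dotProduct, Matrix.vecHead, Matrix.vecTail]

lemma embV_t_psi (X : Matrix (Fin 4) (Fin 4) k) :
    (embVF k X)ᵀ * Psi k = -(Psi k * embVF k X) := by
  ext i j
  fin_cases i <;> fin_cases j <;>
    simp [embVF, cls8, idx8, tau4, Psi, mul_apply, Fin.sum_univ_eight,
      Matrix.vecMul, Matrix.mulVec, dotProduct, Matrix.vecHead, Matrix.vecTail]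

lemma embV_conj_s (X : Matrix (Fin 4) (Fin 4) k) :
    sMat k * embVF k X * sMat k = -(embVF k X) := by
  ext i j
  fin_cases i <;> fin_cases j <;>
    simp [embVF, cls8, idx8, tau4, sMat, diagonal_mul, mul_diagonal,
      Matrix.vecHead, Matrix.vecTail]

lemma GV_embV (X : Matrix (Fin 4) (Fin 4) k) :
    (embVF k X).submatrix aIdx bIdx = X := by
  ext p q
  fin_cases p <;> fin_cases q <;>
    simp [embVF, cls8, idx8, tau4, aIdx, bIdx, Matrix.vecHead, Matrix.vecTail]

lemma embV_recon (v : Matrix (Fin 8) (Fin 8) k) :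
    embVF k (v.submatrix aIdx bIdx)
      = eAM k * v * eBM k + eBM k * (-(vᵀ.submatrix sig8 sig8)) * eAM k := by
  ext i j
  fin_cases i <;> fin_cases j <;>
    simp [embVF, cls8, idx8, tau4, aIdx, bIdx, sig8, eAM, eBM,
      diagonal_mul, mul_diagonal, Matrix.vecHead, Matrix.vecTail, -Matrix.submatrix_cons_row, -Matrix.submatrix_empty]

lemma eAB_one : eAM k + eBM k = 1 := by
  ext i j
  fin_cases i <;> fin_cases j <;>
    simp [eAM, eBM, cls8, diagonal_apply, Matrix.one_apply,
      Matrix.vecHead, Matrix.vecTail]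

lemma s_eq_sub : sMat k = eAM k - eBM k := by
  ext i j
  fin_cases i <;> fin_cases j <;>
    simp [eAM, eBM, sMat, cls8, diagonal_apply, Matrix.vecHead, Matrix.vecTail]

lemma embVF_add (X Y : Matrix (Fin 4) (Fin 4) k) :
    embVF k (X + Y) = embVF k X + embVF k Y := by
  ext i j
  simp only [embVF, of_apply, Matrix.add_apply]
  split_ifs <;> (try simp) <;> (try ring)

lemma embVF_smul (c : k) (X : Matrix (Fin 4) (Fin 4) k) :
    embVF k (c • X) = c • embVF k X := by
  ext i j
  simp only [embVF, of_apply, Matrix.smul_apply, smul_eq_mul]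
  split_ifs <;> (try simp) <;> (try ring)

lemma two_ne_zero' (h2 : ringChar k ≠ 2) : (2:k) ≠ 0 := Ring.two_ne_zero h2

lemma conj_mul (a b : Matrix (Fin 8) (Fin 8) k) :
    (sMat k * a * sMat k) * (sMat k * b * sMat k) = sMat k * (a * b) * sMat k := by
  simp only [← Matrix.mul_assoc]
  rw [Matrix.mul_assoc (sMat k * a) (sMat k) (sMat k), s_mul_s, Matrix.mul_one]

lemma conj_mem_so8 (v : Matrix (Fin 8) (Fin 8) k) (hv : vᵀ * Psi k = -(Psi k * v)) :
    (sMat k * v * sMat k)ᵀ * Psi k = -(Psi k * (sMat k * v * sMat k)) := by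
  have h1 : (sMat k * v * sMat k)ᵀ = sMat k * vᵀ * sMat k := by
    rw [transpose_mul, transpose_mul, s_transpose, Matrix.mul_assoc]
  rw [h1]
  calc sMat k * vᵀ * sMat k * Psi k
      = sMat k * vᵀ * (sMat k * Psi k) := by rw [Matrix.mul_assoc]
    _ = sMat k * vᵀ * (Psi k * sMat k) := by rw [s_psi_comm]
    _ = sMat k * (vᵀ * Psi k) * sMat k := by simp only [Matrix.mul_assoc]
    _ = sMat k * (-(Psi k * v)) * sMat k := by rw [hv]
    _ = -(sMat k * Psi k * v * sMat k) := by
          simp only [Matrix.mul_neg, Matrix.neg_mul, Matrix.mul_assoc]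
    _ = -(Psi k * (sMat k * v * sMat k)) := by
          rw [s_psi_comm]; simp only [Matrix.mul_assoc]

lemma recon_g (h2 : (2:k) ≠ 0) (v : Matrix (Fin 8) (Fin 8) k)
    (hv : sMat k * v * sMat k = v) :
    embF k (v.submatrix aIdx aIdx) (v.submatrix bIdx bIdx) = v := by
  rw [emb_phi k h2, hv, ← two_smul k v, smul_smul, inv_mul_cancel₀ h2, one_smul]

lemma bracket_so8 {x y : Matrix (Fin 8) (Fin 8) k}
    (hx : xᵀ * Psi k = -(Psi k * x)) (hy : yᵀ * Psi k = -(Psi k * y)) :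
    (x * y - y * x)ᵀ * Psi k = -(Psi k * (x * y - y * x)) := by
  have h1 : yᵀ * xᵀ * Psi k = Psi k * (y * x) := by
    rw [Matrix.mul_assoc, hx, Matrix.mul_neg, ← Matrix.mul_assoc, hy,
      Matrix.neg_mul, neg_neg, Matrix.mul_assoc]
  have h2 : xᵀ * yᵀ * Psi k = Psi k * (x * y) := by
    rw [Matrix.mul_assoc, hy, Matrix.mul_neg, ← Matrix.mul_assoc, hx,
      Matrix.neg_mul, neg_neg, Matrix.mul_assoc]
  rw [transpose_sub, transpose_mul, transpose_mul, Matrix.sub_mul, h1, h2,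
    Matrix.mul_sub, neg_sub]

lemma bracket_conj {x y : Matrix (Fin 8) (Fin 8) k}
    (hx : sMat k * x * sMat k = x) (hy : sMat k * y * sMat k = y) :
    sMat k * (x * y - y * x) * sMat k = x * y - y * x := by
  rw [Matrix.mul_sub, Matrix.sub_mul, ← conj_mul, ← conj_mul, hx, hy]

def embVL : Matrix (Fin 4) (Fin 4) k →ₗ[k] Matrix (Fin 8) (Fin 8) k where
  toFun := embVF k
  map_add' := embVF_add k
  map_smul' c X := embVF_smul k c X

def GVL : Matrix (Fin 8) (Fin 8) k →ₗ[k] Matrix (Fin 4) (Fin 4) k where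
  toFun v := v.submatrix aIdx bIdx
  map_add' _ _ := rfl
  map_smul' _ _ := rfl

lemma embVF_mem (X : Matrix (Fin 4) (Fin 4) k) : embVF k X ∈ VSet k :=
  ⟨embV_t_psi k X, embV_conj_s k X⟩

lemma recon_V (h2 : (2:k) ≠ 0) (v : Matrix (Fin 8) (Fin 8) k) (hv : v ∈ VSet k) :
    embVF k (v.submatrix aIdx bIdx) = v := by
  obtain ⟨hv1, hv2⟩ := hv
  have hT : vᵀ.submatrix sig8 sig8 = -v := by
    rw [← psi_conj, Matrix.mul_assoc, hv1, Matrix.mul_neg, ← Matrix.mul_assoc,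
      psi_mul_psi, Matrix.one_mul]
  rw [embV_recon, hT, neg_neg]
  have h1 : (eAM k + eBM k) * v * (eAM k + eBM k) = v := by
    rw [eAB_one, Matrix.one_mul, Matrix.mul_one]
  have h2' : (eAM k - eBM k) * v * (eAM k - eBM k) = -v := by
    rw [← s_eq_sub]; exact hv2
  have key : (2:k) • (eAM k * v * eBM k + eBM k * v * eAM k) = (2:k) • v := by
    have e1 : (2:k) • (eAM k * v * eBM k + eBM k * v * eAM k)
        = (eAM k + eBM k) * v * (eAM k + eBM k)
          - (eAM k - eBM k) * v * (eAM k - eBM k) := by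
      rw [two_smul]
      noncomm_ring
    rw [e1, h1, h2', sub_neg_eq_add, two_smul]
  exact smul_right_injective _ h2 key

lemma finrankV (h2 : (2:k) ≠ 0) : Module.finrank k (VSubm k) = 16 := by
  have e : Matrix (Fin 4) (Fin 4) k ≃ₗ[k] VSubm k := by
    refine LinearEquiv.ofLinear
      ((embVL k).codRestrict (VSubm k) (fun X => embVF_mem k X))
      ((GVL k).comp (VSubm k).subtype) ?_ ?_
    · ext ⟨v, hv⟩
      exact congrFun (congrFun (recon_V k h2 v hv) _) _
    · ext X p q
      exact congrFun (congrFun (GV_embV k X) p) q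
  rw [← e.finrank_eq, Module.finrank_matrix]
  norm_num

end Stmt2Aux

open Stmt2Aux in
/-- `so₈(k) = g ⊕ V` as eigenspaces of `θ(v) = svs`; `g` is a Lie subalgebra
isomorphic as a Lie algebra to `so₄(k) × so₄(k)`, and `dim_k V = 16`. -/
theorem stmt2 (k : Type*) [Field k] (h2 : ringChar k ≠ 2) :
    (∀ v ∈ so8Set k, ∃! p : Matrix (Fin 8) (Fin 8) k × Matrix (Fin 8) (Fin 8) k,
        p.1 ∈ gSet k ∧ p.2 ∈ VSet k ∧ v = p.1 + p.2)
    ∧ (∀ x ∈ gSet k, ∀ y ∈ gSet k, x * y - y * x ∈ gSet k)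
    ∧ (∃ φ : Matrix (Fin 8) (Fin 8) k →ₗ[k]
          Matrix (Fin 4) (Fin 4) k × Matrix (Fin 4) (Fin 4) k,
        Set.InjOn φ (gSet k)
        ∧ φ '' gSet k = {p | p.1 ∈ so4Set k ∧ p.2 ∈ so4Set k}
        ∧ ∀ x ∈ gSet k, ∀ y ∈ gSet k,
            φ (x * y - y * x)
              = ((φ x).1 * (φ y).1 - (φ y).1 * (φ x).1,
                 (φ x).2 * (φ y).2 - (φ y).2 * (φ x).2))
    ∧ Module.finrank k (VSubm k) = 16 := by
  have h2' : (2:k) ≠ 0 := two_ne_zero' k h2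
  refine ⟨?_, ?_, ?_, finrankV k h2'⟩
  · -- part 1
    intro v hv
    have hv' : vᵀ * Psi k = -(Psi k * v) := hv
    have hwso8 : (sMat k * v * sMat k)ᵀ * Psi k = -(Psi k * (sMat k * v * sMat k)) :=
      conj_mem_so8 k v hv'
    have hsws : sMat k * (sMat k * v * sMat k) * sMat k = v := by
      simp only [← Matrix.mul_assoc]
      rw [s_mul_s, Matrix.one_mul, Matrix.mul_assoc, s_mul_s, Matrix.mul_one]
    refine ⟨⟨(2⁻¹:k) • (v + sMat k * v * sMat k),
             (2⁻¹:k) • (v - sMat k * v * sMat k)⟩, ⟨⟨?_, ?_⟩, ⟨?_, ?_⟩, ?_⟩, ?_⟩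
    · rw [Matrix.transpose_smul, Matrix.smul_mul, transpose_add, Matrix.add_mul,
        hv', hwso8, Matrix.mul_smul, Matrix.mul_add, ← neg_add, smul_neg]
    · rw [Matrix.mul_smul, Matrix.smul_mul, Matrix.mul_add, Matrix.add_mul, hsws,
        add_comm]
    · rw [Matrix.transpose_smul, Matrix.smul_mul, transpose_sub, Matrix.sub_mul,
        hv', hwso8, Matrix.mul_smul, Matrix.mul_sub, neg_sub_neg,
        ← neg_sub (Psi k * v) (Psi k * (sMat k * v * sMat k)), smul_neg]
    · rw [Matrix.mul_smul, Matrix.smul_mul, Matrix.mul_sub, Matrix.sub_mul, hsws,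
        ← neg_sub v (sMat k * v * sMat k), smul_neg]
    · rw [← smul_add]
      have hvw : v + sMat k * v * sMat k + (v - sMat k * v * sMat k) = (2:k) • v := by
        rw [two_smul]; abel
      rw [hvw, smul_smul, inv_mul_cancel₀ h2', one_smul]
    · rintro ⟨q1, q2⟩ ⟨⟨hq1a, hq1b⟩, ⟨hq2a, hq2b⟩, hq⟩
      have hwq : sMat k * v * sMat k = q1 - q2 := by
        rw [hq, Matrix.mul_add, Matrix.add_mul, hq1b, hq2b, ← sub_eq_add_neg]
      have e1 : q1 = (2⁻¹:k) • (v + sMat k * v * sMat k) := by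
        have h : v + sMat k * v * sMat k = (2:k) • q1 := by
          rw [hwq, hq, two_smul]; abel
        rw [h, smul_smul, inv_mul_cancel₀ h2', one_smul]
      have e2 : q2 = (2⁻¹:k) • (v - sMat k * v * sMat k) := by
        have h : v - sMat k * v * sMat k = (2:k) • q2 := by
          rw [hwq, hq, two_smul]; abel
        rw [h, smul_smul, inv_mul_cancel₀ h2', one_smul]
      exact Prod.ext e1 e2
  · -- part 2
    rintro x ⟨hx1, hx2⟩ y ⟨hy1, hy2⟩
    exact ⟨bracket_so8 k hx1 hy1, bracket_conj k hx2 hy2⟩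
  · -- part 3
    refine ⟨phiL k, ?_, ?_, ?_⟩
    · rintro x hx y hy hxy
      have h1 : x.submatrix aIdx aIdx = y.submatrix aIdx aIdx :=
        congrArg Prod.fst hxy
      have hB : x.submatrix bIdx bIdx = y.submatrix bIdx bIdx :=
        congrArg Prod.snd hxy
      rw [← recon_g k h2' x hx.2, ← recon_g k h2' y hy.2, h1, hB]
    · apply Set.Subset.antisymm
      · rintro p ⟨v, hv, rfl⟩
        constructor
        · show (v.submatrix aIdx aIdx)ᵀ * J4 k = -(J4 k * v.submatrix aIdx aIdx)
          rw [subA_t, subA_m, hv.1]; rfl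
        · show (v.submatrix bIdx bIdx)ᵀ * J4 k = -(J4 k * v.submatrix bIdx bIdx)
          rw [subB_t, subB_m, hv.1]; rfl
      · rintro ⟨P, Q⟩ ⟨hP, hQ⟩
        refine ⟨embF k P Q, ⟨?_, emb_conj_s k P Q⟩, ?_⟩
        · rw [emb_t_psi, hP, hQ, embF_neg, psi_emb]
        · exact Prod.ext (GA_emb k P Q) (GB_emb k P Q)
    · intro x hx y hy
      have rx : embF k ((phiL k) x).1 ((phiL k) x).2 = x := recon_g k h2' x hx.2
      have ry : embF k ((phiL k) y).1 ((phiL k) y).2 = y := recon_g k h2' y hy.2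
      have key : x * y - y * x
          = embF k (((phiL k) x).1 * ((phiL k) y).1 - ((phiL k) y).1 * ((phiL k) x).1)
                   (((phiL k) x).2 * ((phiL k) y).2 - ((phiL k) y).2 * ((phiL k) x).2) := by
        rw [embF_sub, ← emb_mul, ← emb_mul, rx, ry]
      rw [key]
      exact Prod.ext (GA_emb k _ _) (GB_emb k _ _)

end
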